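/- Let κ be an infinite cardinal, let X be an infinite-dimensional Banach space of density κ, and let ε > 0. Then the unit sphere S_X admits a (1−ε)-separated subset of cardinality κ, and the diameter of S_X equals 2. -/
import Mathlib


universe u

/- STATEMENT 4: Let `κ` be an infinite cardinal and `X` an infinite-dimensional Banach
space of density `κ` (i.e. `κ` is the minimal cardinality of a dense subset of `X`),
and let `ε > 0`. Then the unit sphere of `X` admits a `(1-ε)`-separated subset of
cardinality `κ`, and the diameter of the unit sphere equals `2`. -/
theorem stmt4 {X : Type u} [NormedAddCommGroup X] [NormedSpace ℝ X] [CompleteSpace X]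
    (κ : Cardinal.{u}) (hκ : Cardinal.aleph0 ≤ κ)
    (hdim : ¬FiniteDimensional ℝ X)
    (hdens_ex : ∃ s : Set X, Dense s ∧ Cardinal.mk s = κ)
    (hdens_min : ∀ s : Set X, Dense s → κ ≤ Cardinal.mk s)
    (ε : ℝ) (hε : 0 < ε) :
    (∃ N : Set X, N ⊆ {x : X | ‖x‖ = 1} ∧ Cardinal.mk N = κ ∧
        ∀ x ∈ N, ∀ y ∈ N, x ≠ y → 1 - ε ≤ ‖x - y‖) ∧
    Metric.diam {x : X | ‖x‖ = 1} = 2 := by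
  have hnt : Nontrivial X := by
    by_contra h
    rw [not_nontrivial_iff_subsingleton] at h
    exact hdim (Module.Finite.of_surjective (0 : (Fin 0 → ℝ) →ₗ[ℝ] X)
      (fun x => ⟨0, Subsingleton.elim _ _⟩))
  have hsph : {x : X | ‖x‖ = 1} = Metric.sphere (0:X) 1 := by
    ext x; simp [mem_sphere_iff_norm]
  have hbdd : Bornology.IsBounded {x : X | ‖x‖ = 1} := by
    rw [hsph]; exact Metric.isBounded_sphere
  constructor
  · -- separated set
    set ε' : ℝ := min ε (1/2) with hε'def
    set r : ℝ := 1 - ε' with hrdef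
    have hε'pos : 0 < ε' := lt_min hε (by norm_num)
    have hε'le : ε' ≤ ε := min_le_left _ _
    have hr1 : r < 1 := by simp [hrdef]; linarith
    have hr0 : (1/2:ℝ) ≤ r := by
      have : ε' ≤ 1/2 := min_le_right _ _
      simp only [hrdef]; linarith
    -- Zorn's lemma: maximal r-separated subset of sphere
    have hzorn : ∀ c ⊆ {S : Set X | S ⊆ {x : X | ‖x‖ = 1} ∧
        ∀ x ∈ S, ∀ y ∈ S, x ≠ y → r ≤ ‖x - y‖}, IsChain (fun x1 x2 => x1 ⊆ x2) c →
        ∃ ub ∈ {S : Set X | S ⊆ {x : X | ‖x‖ = 1} ∧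
        ∀ x ∈ S, ∀ y ∈ S, x ≠ y → r ≤ ‖x - y‖}, ∀ s ∈ c, s ⊆ ub := by
      intro c hc hchain
      refine ⟨⋃₀ c, ⟨?_, ?_⟩, fun s hs => Set.subset_sUnion_of_mem hs⟩
      · rintro x ⟨s, hs, hxs⟩
        exact (hc hs).1 hxs
      · rintro x ⟨s, hs, hxs⟩ y ⟨t, ht, hyt⟩ hxy
        rcases hchain.total hs ht with h | h
        · exact (hc ht).2 x (h hxs) y hyt hxy
        · exact (hc hs).2 x hxs y (h hyt) hxy
    obtain ⟨N, hNmax⟩ := zorn_subset {S : Set X | S ⊆ {x : X | ‖x‖ = 1} ∧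
      ∀ x ∈ S, ∀ y ∈ S, x ≠ y → r ≤ ‖x - y‖} hzorn
    obtain ⟨⟨hNsph, hNsep⟩, hNmax'⟩ := hNmax
    -- maximality gives covering
    have hcov : ∀ x : X, ‖x‖ = 1 → x ∉ N → ∃ n ∈ N, ‖x - n‖ < r := by
      intro x hx hxN
      by_contra h
      push_neg at h
      have hmem : insert x N ∈ {S : Set X | S ⊆ {x : X | ‖x‖ = 1} ∧
          ∀ x ∈ S, ∀ y ∈ S, x ≠ y → r ≤ ‖x - y‖} := by
        constructor
        · rintro y (rfl | hy)
          · exact hx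
          · exact hNsph hy
        · rintro a (rfl | ha) b (rfl | hb) hab
          · exact absurd rfl hab
          · exact h b hb
          · rw [norm_sub_rev]; exact h a ha
          · exact hNsep a ha b hb hab
      have := hNmax' hmem (Set.subset_insert x N)
      exact hxN (this (Set.mem_insert x N))
    -- closure of span of N is everything
    have hNC : N ⊆ (Submodule.span ℝ N).topologicalClosure :=
      fun n hn => Submodule.le_topologicalClosure _ (Submodule.subset_span hn)
    have hCtop : (Submodule.span ℝ N).topologicalClosure = ⊤ := by
      by_contra hC
      have hex : ∃ x : X, x ∉ (Submodule.span ℝ N).topologicalClosure := by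
        by_contra h
        push_neg at h
        exact hC (Submodule.eq_top_iff'.2 h)
      have hr' : (1 + r)/2 < 1 := by linarith
      obtain ⟨x₀, hx₀C, hx₀⟩ := riesz_lemma
        (Submodule.isClosed_topologicalClosure _) hex hr'
      have hx₀ne : x₀ ≠ 0 := by
        rintro rfl
        exact hx₀C (Submodule.zero_mem _)
      have hnorm : ‖x₀‖ ≠ 0 := norm_ne_zero_iff.2 hx₀ne
      set u : X := ‖x₀‖⁻¹ • x₀ with hu
      have hunorm : ‖u‖ = 1 := by
        rw [hu, norm_smul, norm_inv, norm_norm, inv_mul_cancel₀ hnorm]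
      have huC : u ∉ (Submodule.span ℝ N).topologicalClosure := by
        intro h
        have : (‖x₀‖ : ℝ) • u ∈ (Submodule.span ℝ N).topologicalClosure :=
          Submodule.smul_mem _ _ h
        rw [hu, smul_inv_smul₀ hnorm] at this
        exact hx₀C this
      have huN : u ∉ N := fun h => huC (hNC h)
      obtain ⟨n, hn, hlt⟩ := hcov u hunorm huN
      have hnC : (‖x₀‖ : ℝ) • n ∈ (Submodule.span ℝ N).topologicalClosure :=
        Submodule.smul_mem _ _ (hNC hn)
      have key : (1 + r)/2 * ‖x₀‖ ≤ ‖x₀ - ‖x₀‖ • n‖ := hx₀ _ hnC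
      have heq : ‖x₀ - ‖x₀‖ • n‖ = ‖x₀‖ * ‖u - n‖ := by
        rw [← norm_norm x₀, ← norm_smul, smul_sub, hu, smul_inv_smul₀ hnorm, norm_norm]
      rw [heq] at key
      have hx₀pos : 0 < ‖x₀‖ := norm_pos_iff.2 hx₀ne
      have : (1 + r)/2 ≤ ‖u - n‖ := by
        rw [mul_comm] at key
        exact le_of_mul_le_mul_left key hx₀pos
      linarith
    -- N is infinite
    have hNinf : N.Infinite := by
      intro hfin
      apply hdim
      have : FiniteDimensional ℝ (Submodule.span ℝ N) :=
        FiniteDimensional.span_of_finite ℝ hfin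
      have hclosed : IsClosed ((Submodule.span ℝ N : Submodule ℝ X) : Set X) :=
        Submodule.closed_of_finiteDimensional _
      have hspan_top : Submodule.span ℝ N = ⊤ := by
        rw [← hCtop]
        exact le_antisymm (Submodule.le_topologicalClosure _)
          (Submodule.topologicalClosure_minimal _ le_rfl hclosed)
      rw [hspan_top] at this
      exact Module.Finite.equiv (Submodule.topEquiv)
    haveI : Infinite ↥N := hNinf.to_subtype
    have hNaleph : Cardinal.aleph0 ≤ Cardinal.mk N := by
      rw [Cardinal.aleph0_le_mk_iff]
      exact Set.infinite_coe_iff.2 hNinf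
    -- dense set of rational combinations
    let f : List (↥N × ℚ) → X := fun l => (l.map (fun p => ((p.2 : ℝ)) • (p.1 : X))).sum
    have hadd : ∀ l₁ l₂, f (l₁ ++ l₂) = f l₁ + f l₂ := by
      intro l₁ l₂; simp [f]
    have hsmul : ∀ (q : ℚ) (l), f (l.map (fun p => (p.1, q * p.2))) = (q : ℝ) • f l := by
      intro q l
      simp only [f, List.map_map, List.smul_sum]
      congr 1
      ext p
      simp [Function.comp, mul_smul]
    set D : Set X := Set.range f with hD
    have hDdense : Dense D := by
      have hsub : (Submodule.span ℝ (N : Set X) : Set X) ⊆ closure D := by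
        intro x hx
        induction hx using Submodule.span_induction with
        | mem n hn =>
          apply subset_closure
          exact ⟨[(⟨n, hn⟩, 1)], by simp [f]⟩
        | zero => exact subset_closure ⟨[], by simp [f]⟩
        | add x y _ _ hx hy =>
          exact map_mem_closure₂ continuous_add hx hy
            (fun a ⟨la, ha⟩ b ⟨lb, hb⟩ => ⟨la ++ lb, by rw [hadd, ha, hb]⟩)
        | smul a x _ hx =>
          rw [Metric.mem_closure_iff] at hx ⊢
          intro δ hδ
          obtain ⟨q, hq⟩ := exists_rat_near a (show (0:ℝ) < δ/(2*(‖x‖+1)) by positivity)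
          obtain ⟨d, hd, hdd⟩ := hx (δ/(2*(|(q:ℝ)|+1))) (by positivity)
          obtain ⟨l, rfl⟩ := hd
          refine ⟨(q:ℝ) • f l, ⟨l.map (fun p => (p.1, q * p.2)), hsmul q l⟩, ?_⟩
          have h1 : dist (a • x) ((q:ℝ) • x) ≤ |a - (q:ℝ)| * ‖x‖ := by
            rw [dist_eq_norm, ← sub_smul, norm_smul, Real.norm_eq_abs]
          have h2 : dist ((q:ℝ) • x) ((q:ℝ) • f l) = |(q:ℝ)| * dist x (f l) := by
            rw [dist_eq_norm, dist_eq_norm, ← smul_sub, norm_smul, Real.norm_eq_abs]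
          have hx1 : |a - (q:ℝ)| * ‖x‖ < δ/2 := by
            have hn0 : (0:ℝ) ≤ ‖x‖ := norm_nonneg x
            calc |a - (q:ℝ)| * ‖x‖ ≤ (δ/(2*(‖x‖+1))) * ‖x‖ := by
                  apply mul_le_mul_of_nonneg_right (le_of_lt hq) hn0
              _ < δ/2 := by
                  rw [div_mul_eq_mul_div, div_lt_div_iff₀ (by positivity) (by norm_num)]
                  ring_nf
                  nlinarith
          have hx2 : |(q:ℝ)| * dist x (f l) < δ/2 := by
            have := abs_nonneg (q:ℝ)
            calc |(q:ℝ)| * dist x (f l) ≤ |(q:ℝ)| * (δ/(2*(|(q:ℝ)|+1))) := by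
                  apply mul_le_mul_of_nonneg_left (le_of_lt hdd) this
              _ < δ/2 := by
                  rw [mul_div_assoc']
                  rw [div_lt_div_iff₀ (by positivity) (by norm_num)]
                  nlinarith
          calc dist (a • x) ((q:ℝ) • f l)
              ≤ dist (a • x) ((q:ℝ) • x) + dist ((q:ℝ) • x) ((q:ℝ) • f l) :=
                dist_triangle _ _ _
            _ ≤ |a - (q:ℝ)| * ‖x‖ + |(q:ℝ)| * dist x (f l) := by rw [h2]; linarith [h1]
            _ < δ/2 + δ/2 := by linarith
            _ = δ := by ring
      rw [dense_iff_closure_eq]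
      apply Set.eq_univ_of_univ_subset
      have : closure ((Submodule.span ℝ (N : Set X) : Submodule ℝ X) : Set X) = Set.univ := by
        rw [← Submodule.topologicalClosure_coe, hCtop]
        rfl
      rw [← this]
      exact closure_minimal hsub isClosed_closure
    -- cardinality of D
    have hDle : Cardinal.mk D ≤ Cardinal.mk N := by
      have h1 : Cardinal.mk D ≤ Cardinal.mk (List (↥N × ℚ)) := Cardinal.mk_range_le
      have h2 : Cardinal.mk (List (↥N × ℚ)) = Cardinal.mk (↥N × ℚ) ⊔ Cardinal.aleph0 :=
        Cardinal.mk_list_eq_max_mk_aleph0 _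
      have h3 : Cardinal.mk (↥N × ℚ) = Cardinal.mk N := by
        rw [Cardinal.mk_prod, Cardinal.mkRat]
        simp only [Cardinal.lift_id', Cardinal.lift_aleph0]
        rw [Cardinal.mul_aleph0_eq hNaleph]
      rw [h3] at h2
      rw [h2, sup_of_le_left hNaleph] at h1
      exact h1
    have hκle : κ ≤ Cardinal.mk N := le_trans (hdens_min D hDdense) hDle
    obtain ⟨N', hN'sub, hN'card⟩ := Cardinal.le_mk_iff_exists_subset.1 hκle
    refine ⟨N', fun x hx => hNsph (hN'sub hx), hN'card, ?_⟩
    intro x hx y hy hxy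
    have := hNsep x (hN'sub hx) y (hN'sub hy) hxy
    have : r ≤ ‖x - y‖ := this
    simp only [hrdef] at this
    linarith
  · -- diameter
    apply le_antisymm
    · calc Metric.diam {x : X | ‖x‖ = 1} ≤ Metric.diam (Metric.closedBall (0:X) 1) := by
            apply Metric.diam_mono _ Metric.isBounded_closedBall
            rw [hsph]; exact Metric.sphere_subset_closedBall
        _ ≤ 2 * 1 := Metric.diam_closedBall (by norm_num)
        _ = 2 := by ring
    · obtain ⟨x, hx⟩ : (Metric.sphere (0:X) 1).Nonempty := NormedSpace.sphere_nonempty.2 zero_le_one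
      rw [mem_sphere_iff_norm, sub_zero] at hx
      have hx' : x ∈ {x : X | ‖x‖ = 1} := hx
      have hnx : -x ∈ {x : X | ‖x‖ = 1} := by simp [Set.mem_setOf_eq, hx]
      have : dist x (-x) ≤ Metric.diam {x : X | ‖x‖ = 1} :=
        Metric.dist_le_diam_of_mem hbdd hx' hnx
      rw [dist_eq_norm, sub_neg_eq_add, ← two_smul ℝ x, norm_smul] at this
      simp [hx] at this
      linarith
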